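/- Let G=(V,E,ω) be a finite weighted undirected graph, let H be a weighted edge set on V, let ε>0 be real, let β≥1 be an integer, and let p,k be integers with 0≤p≤k+1. Suppose that for every pair x,y∈V with d_G(x,y)≤2^p one has d_{G∪H}^{(β)}(x,y) ≤ (1+ε)·d_G(x,y). Then for every pair u,v∈V with d_G(u,v)≤2^{k+1} (and finite), one has d_{G∪H}^{(2^{k+1-p}·(β+1))}(u,v) ≤ (1+ε)·d_G(u,v). -/

import Mathlib

open scoped ENNReal Classical

/-- `hopDist w t u v` is the minimum total weight of a `u`–`v` path with at most `t` edges,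
in the weighted graph whose (symmetric) weight function is `w` (`⊤` meaning "no edge"). -/
noncomputable def hopDist {V : Type*} (w : V → V → ℝ≥0∞) : ℕ → V → V → ℝ≥0∞
  | 0, u, v => if u = v then 0 else ⊤
  | t + 1, u, v => min (hopDist w t u v) (⨅ x : V, w u x + hopDist w t x v)

/-- Shortest-path distance. -/
noncomputable def gDist {V : Type*} (w : V → V → ℝ≥0∞) (u v : V) : ℝ≥0∞ :=
  ⨅ t : ℕ, hopDist w t u v

/-- Union of two weighted edge sets, keeping the smaller weight on parallel edges. -/
noncomputable def unionW {V : Type*} (w₁ w₂ : V → V → ℝ≥0∞) (u v : V) : ℝ≥0∞ :=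
  min (w₁ u v) (w₂ u v)

/-- Number of (undirected) edges of a weighted edge set. -/
noncomputable def edgeCount {V : Type*} (w : V → V → ℝ≥0∞) : ℕ :=
  Set.ncard {p : Sym2 V | ∃ u v : V, p = s(u, v) ∧ u ≠ v ∧ w u v ≠ ⊤}

/-- `H` is a `(β, ε)`-hopset for `G`. -/
def IsHopset {V : Type*} (wG wH : V → V → ℝ≥0∞) (β : ℕ) (ε : ℝ) : Prop :=
  ∀ u v : V, gDist wG u v ≤ hopDist (unionW wG wH) β u v ∧
    hopDist (unionW wG wH) β u v ≤ ENNReal.ofReal (1 + ε) * gDist wG u v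

namespace HopRed

variable {V : Type*}

/-- weight of a walk given by a start vertex and list of successive vertices -/
noncomputable def walkW (w : V → V → ℝ≥0∞) : V → List V → ℝ≥0∞
  | _, [] => 0
  | u, x :: l => w u x + walkW w x l

def walkLast : V → List V → V
  | u, [] => u
  | _, x :: l => walkLast x l

lemma hopDist_zero (w : V → V → ℝ≥0∞) (u v : V) :
    hopDist w 0 u v = if u = v then 0 else ⊤ := rfl

lemma hopDist_succ (w : V → V → ℝ≥0∞) (t : ℕ) (u v : V) :
    hopDist w (t + 1) u v
      = min (hopDist w t u v) (⨅ x : V, w u x + hopDist w t x v) := rfl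

lemma hopDist_succ_le (w : V → V → ℝ≥0∞) (t : ℕ) (u v : V) :
    hopDist w (t + 1) u v ≤ hopDist w t u v := min_le_left _ _

lemma hopDist_anti (w : V → V → ℝ≥0∞) {t s : ℕ} (h : t ≤ s) (u v : V) :
    hopDist w s u v ≤ hopDist w t u v := by
  induction s with
  | zero => obtain rfl := Nat.le_zero.mp h; exact le_rfl
  | succ n ih =>
    rcases Nat.lt_or_ge t (n + 1) with h' | h'
    · exact (hopDist_succ_le w n u v).trans (ih (Nat.lt_succ_iff.mp h'))
    · obtain rfl : t = n + 1 := le_antisymm h h'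
      exact le_rfl

lemma hopDist_self_le (w : V → V → ℝ≥0∞) (t : ℕ) (u : V) : hopDist w t u u ≤ 0 :=
  (hopDist_anti w (Nat.zero_le t) u u).trans (by simp [hopDist_zero])

lemma gDist_le (w : V → V → ℝ≥0∞) (t : ℕ) (u v : V) : gDist w u v ≤ hopDist w t u v :=
  iInf_le _ t

lemma gDist_self (w : V → V → ℝ≥0∞) (u : V) : gDist w u u = 0 :=
  le_antisymm ((gDist_le w 0 u u).trans (by simp [hopDist_zero])) zero_le

lemma walkLast_append (a b : List V) (u : V) :
    walkLast u (a ++ b) = walkLast (walkLast u a) b := by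
  induction a generalizing u with
  | nil => rfl
  | cons x a ih => simp [walkLast, ih]

lemma walkW_append (w : V → V → ℝ≥0∞) (a b : List V) (u : V) :
    walkW w u (a ++ b) = walkW w u a + walkW w (walkLast u a) b := by
  induction a generalizing u with
  | nil => simp [walkW, walkLast]
  | cons x a ih => simp [walkW, walkLast, ih, add_assoc]

lemma hopDist_le_walkW (w : V → V → ℝ≥0∞) :
    ∀ (l : List V) (u : V) (t : ℕ), l.length ≤ t →
      hopDist w t u (walkLast u l) ≤ walkW w u l := by
  intro l
  induction l with
  | nil => intro u t _; simpa [walkW, walkLast] using hopDist_self_le w t u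
  | cons x l ih =>
    intro u t ht
    obtain ⟨s, rfl⟩ : ∃ s, t = s + 1 := ⟨t - 1, by simp at ht; omega⟩
    calc hopDist w (s + 1) u (walkLast u (x :: l))
        ≤ ⨅ z : V, w u z + hopDist w s z (walkLast x l) := min_le_right _ _
      _ ≤ w u x + hopDist w s x (walkLast x l) := iInf_le _ x
      _ ≤ w u x + walkW w x l := add_le_add_right (ih x s (by simp at ht; omega)) _
      _ = walkW w u (x :: l) := rfl

lemma gDist_le_walkW (w : V → V → ℝ≥0∞) (l : List V) (u : V) :
    gDist w u (walkLast u l) ≤ walkW w u l :=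
  (gDist_le w l.length u _).trans (hopDist_le_walkW w l u _ le_rfl)

lemma exists_walk [Finite V] (w : V → V → ℝ≥0∞) :
    ∀ (t : ℕ) (u v : V), hopDist w t u v ≠ ⊤ →
      ∃ l : List V, walkLast u l = v ∧ walkW w u l ≤ hopDist w t u v := by
  intro t
  induction t with
  | zero =>
    intro u v h
    by_cases huv : u = v
    · exact ⟨[], huv, by simp [walkW, hopDist_zero, huv]⟩
    · simp [hopDist_zero, huv] at h
  | succ s ih =>
    intro u v h
    haveI : Nonempty V := ⟨u⟩
    rcases le_total (hopDist w s u v) (⨅ x : V, w u x + hopDist w s x v) with hc | hc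
    · have hmin : hopDist w (s + 1) u v = hopDist w s u v := by
        rw [hopDist_succ]; exact min_eq_left hc
      rw [hmin] at h ⊢
      exact ih u v h
    · have hmin : hopDist w (s + 1) u v = ⨅ x : V, w u x + hopDist w s x v := by
        rw [hopDist_succ]; exact min_eq_right hc
      rw [hmin] at h ⊢
      obtain ⟨x₀, hx₀⟩ := Finite.exists_min (fun x : V => w u x + hopDist w s x v)
      have hBeq : (⨅ x : V, w u x + hopDist w s x v) = w u x₀ + hopDist w s x₀ v :=
        le_antisymm (iInf_le _ x₀) (le_iInf hx₀)
      rw [hBeq] at h ⊢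
      have hx_top : hopDist w s x₀ v ≠ ⊤ := fun ht => h (by simp [ht])
      obtain ⟨l, hl1, hl2⟩ := ih x₀ v hx_top
      exact ⟨x₀ :: l, hl1, add_le_add_right hl2 _⟩

lemma removal (w : V → V → ℝ≥0∞) :
    ∀ (n : ℕ) (l : List V), l.length ≤ n → ∀ u : V,
      ∃ l' : List V, walkLast u l' = walkLast u l ∧ (u :: l').Nodup ∧
        (∀ z ∈ l', z ∈ l) ∧ walkW w u l' ≤ walkW w u l := by
  intro n
  induction n with
  | zero =>
    intro l hl u
    obtain rfl : l = [] := List.length_eq_zero_iff.mp (Nat.le_zero.mp hl)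
    exact ⟨[], rfl, by simp, by simp, le_rfl⟩
  | succ n ih =>
    intro l hl u
    by_cases hu : u ∈ l
    · obtain ⟨a, b, rfl⟩ := List.append_of_mem hu
      have hsplit : a ++ u :: b = (a ++ [u]) ++ b := by simp
      have hlast : walkLast u (a ++ [u]) = u := by
        rw [walkLast_append]; rfl
      have h1 : walkLast u (a ++ u :: b) = walkLast u b := by
        rw [hsplit, walkLast_append, hlast]
      have h2 : walkW w u b ≤ walkW w u (a ++ u :: b) := by
        rw [hsplit, walkW_append, hlast]
        exact le_add_self
      have hlen : b.length ≤ n := by simp at hl; omega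
      obtain ⟨l', e1, e2, e3, e4⟩ := ih b hlen u
      exact ⟨l', e1.trans h1.symm, e2, fun z hz => by simp [e3 z hz], e4.trans h2⟩
    · cases l with
      | nil => exact ⟨[], rfl, by simp, by simp, le_rfl⟩
      | cons x l2 =>
        obtain ⟨l', e1, e2, e3, e4⟩ := ih l2 (by simp at hl; omega) x
        have hux : u ≠ x := fun h => hu (h ▸ List.mem_cons_self)
        have hul' : u ∉ l' := fun h => hu (List.mem_cons_of_mem _ (e3 u h))
        refine ⟨x :: l', by simpa [walkLast] using e1, ?_, ?_, ?_⟩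
        · refine List.nodup_cons.mpr ⟨?_, e2⟩
          simp only [List.mem_cons]
          rintro (rfl | h)
          · exact hux rfl
          · exact hul' h
        · intro z hz
          rcases List.mem_cons.mp hz with rfl | h
          · exact List.mem_cons_self
          · exact List.mem_cons_of_mem _ (e3 z h)
        · exact add_le_add_right e4 _

lemma hopDist_card_le [Fintype V] (w : V → V → ℝ≥0∞) (t : ℕ) (u v : V) :
    hopDist w (Fintype.card V) u v ≤ hopDist w t u v := by
  by_cases h : hopDist w t u v = ⊤
  · simp [h]
  obtain ⟨l, rfl, hw⟩ := exists_walk w t u v h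
  obtain ⟨l', e1, e2, _, e4⟩ := removal w l.length l le_rfl u
  have hlen : l'.length ≤ Fintype.card V := by
    have := e2.length_le_card
    simp at this; omega
  calc hopDist w (Fintype.card V) u (walkLast u l)
      = hopDist w (Fintype.card V) u (walkLast u l') := by rw [e1]
    _ ≤ walkW w u l' := (hopDist_anti w hlen u _).trans (hopDist_le_walkW w l' u _ le_rfl)
    _ ≤ walkW w u l := e4
    _ ≤ hopDist w t u (walkLast u l) := hw

lemma gDist_eq_hopDist_card [Fintype V] (w : V → V → ℝ≥0∞) (u v : V) :
    gDist w u v = hopDist w (Fintype.card V) u v :=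
  le_antisymm (iInf_le _ _) (le_iInf fun t => hopDist_card_le w t u v)

lemma exists_walk_gDist [Fintype V] (w : V → V → ℝ≥0∞) (u v : V) (h : gDist w u v ≠ ⊤) :
    ∃ l, walkLast u l = v ∧ walkW w u l = gDist w u v := by
  rw [gDist_eq_hopDist_card] at h
  obtain ⟨l, rfl, hw⟩ := exists_walk w (Fintype.card V) u v h
  refine ⟨l, rfl, le_antisymm ?_ ?_⟩
  · exact hw.trans (gDist_eq_hopDist_card w u _).symm.le
  · exact gDist_le_walkW w l u

lemma hopDist_triangle (w : V → V → ℝ≥0∞) :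
    ∀ (s t : ℕ) (u x v : V), hopDist w (s + t) u v ≤ hopDist w s u x + hopDist w t x v := by
  intro s
  induction s with
  | zero =>
    intro t u x v
    by_cases h : u = x
    · subst h; simp [hopDist_zero]
    · simp [hopDist_zero, h]
  | succ s ih =>
    intro t u x v
    have harr : s + 1 + t = s + t + 1 := by omega
    rw [harr, hopDist_succ w s u x, ← min_add_add_right]
    refine le_min ?_ ?_
    · exact (hopDist_succ_le w (s + t) u v).trans (ih t u x v)
    · rw [ENNReal.iInf_add]
      refine le_iInf fun z => ?_
      calc hopDist w (s + t + 1) u v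
          ≤ ⨅ y : V, w u y + hopDist w (s + t) y v := min_le_right _ _
        _ ≤ w u z + hopDist w (s + t) z v := iInf_le _ z
        _ ≤ w u z + (hopDist w s z x + hopDist w t x v) := add_le_add_right (ih t z x v) _
        _ = w u z + hopDist w s z x + hopDist w t x v := (add_assoc _ _ _).symm

lemma hopDist_one_le (w : V → V → ℝ≥0∞) (u v : V) : hopDist w 1 u v ≤ w u v :=
  calc hopDist w 1 u v ≤ ⨅ x : V, w u x + hopDist w 0 x v := min_le_right _ _
    _ ≤ w u v + hopDist w 0 v v := iInf_le _ v
    _ = w u v := by simp [hopDist_zero]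

lemma gDist_le_edge_add [Fintype V] (w : V → V → ℝ≥0∞) (u z v : V) :
    gDist w u v ≤ w u z + gDist w z v := by
  rw [gDist_eq_hopDist_card w z v]
  exact (gDist_le w (1 + Fintype.card V) u v).trans
    ((hopDist_triangle w 1 _ u z v).trans (add_le_add_left (hopDist_one_le w u z) _))

lemma split [Fintype V] (w : V → V → ℝ≥0∞) :
    ∀ (l : List V) (u : V) (M : ℝ≥0∞), M < walkW w u l → walkW w u l ≠ ⊤ →
      ∃ x y : V, gDist w u x ≤ M ∧
        gDist w u x + w x y + gDist w y (walkLast u l) ≤ walkW w u l ∧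
        gDist w y (walkLast u l) + M ≤ walkW w u l := by
  intro l
  induction l with
  | nil => intro u M hM _; exact absurd hM (by simp [walkW])
  | cons z l2 ih =>
    intro u M hM htop
    have hW : walkW w u (z :: l2) = w u z + walkW w z l2 := rfl
    have hsuf : gDist w z (walkLast z l2) ≤ walkW w z l2 := gDist_le_walkW w l2 z
    by_cases hz : M < w u z
    · refine ⟨u, z, by simp [gDist_self], ?_, ?_⟩
      · rw [gDist_self]
        calc 0 + w u z + gDist w z (walkLast u (z :: l2))
            = w u z + gDist w z (walkLast z l2) := by rw [zero_add]; rfl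
          _ ≤ w u z + walkW w z l2 := add_le_add_right hsuf _
          _ = walkW w u (z :: l2) := rfl
      · calc gDist w z (walkLast u (z :: l2)) + M
            = gDist w z (walkLast z l2) + M := rfl
          _ ≤ walkW w z l2 + w u z := add_le_add hsuf hz.le
          _ = walkW w u (z :: l2) := by rw [hW, add_comm]
    · push_neg at hz
      have htop2 : walkW w z l2 ≠ ⊤ := fun h => htop (by rw [hW, h, add_top])
      have hwuz : w u z ≠ ⊤ := by
        intro h
        exact htop (by rw [hW, h, top_add])
      have hM2 : M - w u z < walkW w z l2 := by
        rw [ENNReal.sub_lt_iff_lt_right hwuz hz]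
        rw [hW] at hM
        rwa [add_comm] at hM
      obtain ⟨x, y, h1, h2, h3⟩ := ih z (M - w u z) hM2 htop2
      refine ⟨x, y, ?_, ?_, ?_⟩
      · calc gDist w u x ≤ w u z + gDist w z x := gDist_le_edge_add w u z x
          _ ≤ w u z + (M - w u z) := add_le_add_right h1 _
          _ = M := add_tsub_cancel_of_le hz
      · calc gDist w u x + w x y + gDist w y (walkLast u (z :: l2))
            ≤ (w u z + gDist w z x) + w x y + gDist w y (walkLast z l2) :=
              add_le_add (add_le_add_left (gDist_le_edge_add w u z x) _) le_rfl
          _ = w u z + (gDist w z x + w x y + gDist w y (walkLast z l2)) := by ring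
          _ ≤ w u z + walkW w z l2 := add_le_add_right h2 _
          _ = walkW w u (z :: l2) := rfl
      · calc gDist w y (walkLast u (z :: l2)) + M
            = gDist w y (walkLast z l2) + ((M - w u z) + w u z) := by
              rw [tsub_add_cancel_of_le hz]; rfl
          _ = gDist w y (walkLast z l2) + (M - w u z) + w u z := (add_assoc _ _ _).symm
          _ ≤ walkW w z l2 + w u z := add_le_add_left h3 _
          _ = walkW w u (z :: l2) := by rw [hW, add_comm]



lemma key {V : Type*} [Fintype V] (wG wH : V → V → ℝ≥0∞) (ε : ℝ) (hε : 0 ≤ ε) (β p : ℕ)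
    (hyp : ∀ x y : V, gDist wG x y ≤ (2 : ℝ≥0∞) ^ p →
      hopDist (unionW wG wH) β x y ≤ ENNReal.ofReal (1 + ε) * gDist wG x y) :
    ∀ (j : ℕ) (u v : V), gDist wG u v ≤ (2 : ℝ≥0∞) ^ (p + j) → gDist wG u v ≠ ⊤ →
      hopDist (unionW wG wH) (2 ^ j * (β + 1) - 1) u v ≤
        ENNReal.ofReal (1 + ε) * gDist wG u v := by
  intro j
  induction j with
  | zero =>
    intro u v h _
    have he : 2 ^ 0 * (β + 1) - 1 = β := by simp
    rw [he]
    exact hyp u v (by simpa using h)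
  | succ j ih =>
    intro u v h htop
    set M : ℝ≥0∞ := 2 ^ (p + j) with hMdef
    have hM : M ≠ ⊤ := by
      simp [hMdef]
    have hpow : 2 ^ j * (β + 1) - 1 ≤ 2 ^ (j + 1) * (β + 1) - 1 := by
      have : (2 : ℕ) ^ j ≤ 2 ^ (j + 1) := Nat.pow_le_pow_right (by norm_num) (Nat.le_succ j)
      exact Nat.sub_le_sub_right (Nat.mul_le_mul_right _ this) 1
    have h2M : gDist wG u v ≤ M + M := by
      calc gDist wG u v ≤ 2 ^ (p + (j + 1)) := h
        _ = M + M := by rw [hMdef, show p + (j + 1) = (p + j) + 1 by omega, pow_succ, mul_two]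
    by_cases hle : gDist wG u v ≤ M
    · exact (hopDist_anti _ hpow u v).trans (ih u v hle htop)
    · push_neg at hle
      obtain ⟨l, rfl, hw⟩ := exists_walk_gDist wG u v htop
      obtain ⟨x, y, h1, h2, h3⟩ := split wG l u M (hw.symm ▸ hle) (hw.symm ▸ htop)
      rw [hw] at h2 h3
      have hyle : gDist wG y (walkLast u l) ≤ M := by
        have := h3.trans h2M
        exact (ENNReal.add_le_add_iff_right hM).mp this
      have hxtop : gDist wG u x ≠ ⊤ := (h1.trans_lt (hM.lt_top)).ne
      have hytop : gDist wG y (walkLast u l) ≠ ⊤ := (hyle.trans_lt (hM.lt_top)).ne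
      have Hux := ih u x h1 hxtop
      have Hyv := ih y (walkLast u l) hyle hytop
      have Hxy : hopDist (unionW wG wH) 1 x y ≤ wG x y :=
        (hopDist_one_le _ x y).trans (min_le_left _ _)
      set T := 2 ^ j * (β + 1) - 1 with hTdef
      have hT1 : 1 ≤ 2 ^ j * (β + 1) := Nat.one_le_iff_ne_zero.mpr (by positivity)
      have hcount : 2 ^ (j + 1) * (β + 1) - 1 = T + (1 + T) := by
        rw [hTdef, pow_succ]
        have h2 : 2 ^ j * 2 * (β + 1) = 2 ^ j * (β + 1) * 2 := by ring
        omega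
      rw [hcount]
      calc hopDist (unionW wG wH) (T + (1 + T)) u (walkLast u l)
          ≤ hopDist (unionW wG wH) T u x
            + hopDist (unionW wG wH) (1 + T) x (walkLast u l) :=
            hopDist_triangle _ T (1 + T) u x _
        _ ≤ hopDist (unionW wG wH) T u x
            + (hopDist (unionW wG wH) 1 x y + hopDist (unionW wG wH) T y (walkLast u l)) :=
            add_le_add_right (hopDist_triangle _ 1 T x y _) _
        _ ≤ ENNReal.ofReal (1 + ε) * gDist wG u x
            + (wG x y + ENNReal.ofReal (1 + ε) * gDist wG y (walkLast u l)) :=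
            add_le_add Hux (add_le_add Hxy Hyv)
        _ ≤ ENNReal.ofReal (1 + ε) * gDist wG u x
            + (ENNReal.ofReal (1 + ε) * wG x y
              + ENNReal.ofReal (1 + ε) * gDist wG y (walkLast u l)) := by
            gcongr
            exact le_mul_of_one_le_left zero_le (ENNReal.one_le_ofReal.mpr (by linarith))
        _ = ENNReal.ofReal (1 + ε)
            * (gDist wG u x + wG x y + gDist wG y (walkLast u l)) := by ring
        _ ≤ ENNReal.ofReal (1 + ε) * gDist wG u (walkLast u l) := mul_le_mul_right h2 _

end HopRed


/-- Hop-reduction lemma: a hopset handling distances up to `2^p` with `β` hops handles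
distances up to `2^(k+1)` with `2^(k+1-p) * (β+1)` hops. -/
theorem hop_reduction (V : Type) [Fintype V] (wG wH : V → V → ℝ≥0∞)
    (hGsymm : ∀ u v, wG u v = wG v u) (hHsymm : ∀ u v, wH u v = wH v u)
    (hHpos : ∀ u v, 0 < wH u v)
    (ε : ℝ) (hε : 0 < ε) (β : ℕ) (hβ : 1 ≤ β) (p k : ℕ) (hpk : p ≤ k + 1)
    (hyp : ∀ x y : V, gDist wG x y ≤ (2 : ℝ≥0∞) ^ p →
      hopDist (unionW wG wH) β x y ≤ ENNReal.ofReal (1 + ε) * gDist wG x y) :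
    ∀ u v : V, gDist wG u v ≤ (2 : ℝ≥0∞) ^ (k + 1) → gDist wG u v ≠ ⊤ →
      hopDist (unionW wG wH) (2 ^ (k + 1 - p) * (β + 1)) u v ≤
        ENNReal.ofReal (1 + ε) * gDist wG u v := by
  intro u v h htop
  have hkey := HopRed.key wG wH ε hε.le β p hyp (k + 1 - p) u v
    (by rwa [Nat.add_sub_cancel' hpk]) htop
  exact (HopRed.hopDist_anti _ (Nat.sub_le _ 1) u v).trans hkey
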